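/- Let T be a collection of c·n subsets of [n], each of size ℓ, and let μ be a probability distribution on subsets of [n] whose support is T. Then there exist s ∈ [ℓ] and a sub-collection S ⊆ T such that: (1) S is a (c·n^{m/ℓ})-daisy with kernel K where m = max{1, s−1}; (2) |K| ≤ ℓ·n^{1−s/ℓ}; (3) every T ∈ S satisfies |T\K| ≤ s; and (4) μ(S) ≥ 1/ℓ. -/
import Mathlib


/-- the daisy lemma. -/
theorem daisy_lemma
    (n ℓ : ℕ) (hn : 1 ≤ n) (hℓ : 1 ≤ ℓ) (c : ℝ)
    (T : Finset (Finset (Fin n)))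
    (hsize : ∀ A ∈ T, A.card = ℓ)
    (hcard : (T.card : ℝ) = c * n)
    (μ : Finset (Fin n) → ℝ)
    (hμ0 : ∀ A, 0 ≤ μ A)
    (hsupp : ∀ A, 0 < μ A ↔ A ∈ T)
    (hμ1 : ∑ A ∈ T, μ A = 1) :
    ∃ s ∈ Finset.Icc 1 ℓ, ∃ S ⊆ T, ∃ K : Finset (Fin n),
      (∀ u : Fin n, u ∉ K →
        ((S.filter (fun A => u ∈ A \ K)).card : ℝ) ≤
          c * (n : ℝ) ^ (((max 1 (s - 1) : ℕ) : ℝ) / (ℓ : ℝ))) ∧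
      ((K.card : ℝ) ≤ (ℓ : ℝ) * (n : ℝ) ^ ((1 : ℝ) - (s : ℝ) / (ℓ : ℝ))) ∧
      (∀ A ∈ S, (A \ K).card ≤ s) ∧
      ((1 : ℝ) / (ℓ : ℝ) ≤ ∑ A ∈ S, μ A) := by
  classical
  have hn0 : (0:ℝ) < n := by exact_mod_cast hn
  have hn1 : (1:ℝ) ≤ n := by exact_mod_cast hn
  have hℓ0 : (0:ℝ) < ℓ := by exact_mod_cast hℓ
  have hT : T.Nonempty := by
    rcases Finset.eq_empty_or_nonempty T with h | h
    · rw [h] at hμ1; simp at hμ1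
    · exact h
  have hc : 0 < c := by
    have h1 : (0:ℝ) < T.card := by exact_mod_cast Finset.card_pos.mpr hT
    nlinarith [hcard]
  set deg : Fin n → ℕ := fun u => (T.filter (fun A => u ∈ A)).card with hdeg
  set Kf : ℕ → Finset (Fin n) :=
    fun s => Finset.univ.filter (fun u => c * (n:ℝ) ^ ((s:ℝ)/(ℓ:ℝ)) < (deg u : ℝ)) with hKf
  have hKmem : ∀ (s : ℕ) (u : Fin n),
      u ∈ Kf s ↔ c * (n:ℝ) ^ ((s:ℝ)/(ℓ:ℝ)) < (deg u : ℝ) := by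
    intro s u; simp [hKf]
  have hKanti : ∀ s t : ℕ, s ≤ t → Kf t ⊆ Kf s := by
    intro s t hst u hu
    rw [hKmem] at hu ⊢
    refine lt_of_le_of_lt ?_ hu
    have hle : (n:ℝ) ^ ((s:ℝ)/(ℓ:ℝ)) ≤ (n:ℝ) ^ ((t:ℝ)/(ℓ:ℝ)) := by
      apply Real.rpow_le_rpow_of_exponent_le hn1
      gcongr
    exact mul_le_mul_of_nonneg_left hle hc.le
  -- total degree
  have hdegsum : ∑ u : Fin n, deg u = ℓ * T.card := by
    have h1 : ∑ u : Fin n, deg u = ∑ A ∈ T, A.card := by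
      calc ∑ u : Fin n, deg u
          = ∑ u : Fin n, ∑ A ∈ T, if u ∈ A then 1 else 0 := by
            simp only [hdeg, Finset.card_filter]
        _ = ∑ A ∈ T, ∑ u : Fin n, if u ∈ A then 1 else 0 := Finset.sum_comm
        _ = ∑ A ∈ T, A.card := by
            refine Finset.sum_congr rfl fun A hA => ?_
            rw [Finset.sum_ite_mem, Finset.univ_inter, Finset.sum_const, smul_eq_mul,
              mul_one]
    rw [h1, Finset.sum_congr rfl hsize, Finset.sum_const, smul_eq_mul, Nat.mul_comm]
  -- kernel size bound
  have hKcard : ∀ s : ℕ,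
      ((Kf s).card : ℝ) ≤ (ℓ:ℝ) * (n:ℝ) ^ ((1:ℝ) - (s:ℝ)/(ℓ:ℝ)) := by
    intro s
    set X : ℝ := (n:ℝ) ^ ((s:ℝ)/(ℓ:ℝ)) with hX
    have hx : (0:ℝ) < X := Real.rpow_pos_of_pos hn0 _
    have h1 : ((Kf s).card : ℝ) * (c * X) ≤ ∑ u ∈ Kf s, (deg u : ℝ) := by
      have := Finset.card_nsmul_le_sum (Kf s) (fun u => (deg u : ℝ)) (c * X)
        (fun u hu => le_of_lt ((hKmem s u).mp hu))
      rwa [nsmul_eq_mul] at this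
    have h2 : ∑ u ∈ Kf s, (deg u:ℝ) ≤ ∑ u : Fin n, (deg u:ℝ) :=
      Finset.sum_le_sum_of_subset_of_nonneg (Finset.subset_univ _)
        (fun u _ _ => by positivity)
    have h3 : ∑ u : Fin n, (deg u:ℝ) = (ℓ:ℝ) * (c * n) := by
      calc ∑ u : Fin n, (deg u:ℝ) = ((∑ u : Fin n, deg u : ℕ) : ℝ) := by push_cast; rfl
        _ = ((ℓ * T.card : ℕ) : ℝ) := by rw [hdegsum]
        _ = (ℓ:ℝ) * (c * n) := by push_cast; rw [hcard]
    have hfull : ((Kf s).card : ℝ) * (c * X) ≤ (ℓ:ℝ) * (c * n) :=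
      h1.trans (h2.trans_eq h3)
    have h5 : ((Kf s).card:ℝ) * X ≤ (ℓ:ℝ) * n := by nlinarith [hfull, hc, hx]
    have heq : (ℓ:ℝ) * (n:ℝ)^((1:ℝ) - (s:ℝ)/(ℓ:ℝ)) = (ℓ:ℝ) * n / X := by
      rw [Real.rpow_sub hn0, Real.rpow_one]; ring
    rw [heq, le_div_iff₀ hx]
    exact h5
  -- minimal s for each A
  have hex : ∀ A : Finset (Fin n), ∃ s, 1 ≤ s ∧ (A \ Kf s).card ≤ s :=
    fun A => ⟨max 1 A.card, le_max_left _ _,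
      le_trans (Finset.card_le_card Finset.sdiff_subset) (le_max_right _ _)⟩
  set sOf : Finset (Fin n) → ℕ := fun A => Nat.find (hex A) with hsOf
  have hs1 : ∀ A, 1 ≤ sOf A := fun A => (Nat.find_spec (hex A)).1
  have hscard : ∀ A, (A \ Kf (sOf A)).card ≤ sOf A := fun A => (Nat.find_spec (hex A)).2
  have hsle : ∀ A ∈ T, sOf A ≤ ℓ := by
    intro A hA
    refine Nat.find_min' (hex A) ⟨hℓ, ?_⟩
    calc (A \ Kf ℓ).card ≤ A.card := Finset.card_le_card Finset.sdiff_subset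
      _ = ℓ := hsize A hA
  have hsmin : ∀ A, 2 ≤ sOf A → sOf A ≤ (A \ Kf (sOf A - 1)).card := by
    intro A h2
    have hlt : sOf A - 1 < sOf A := by omega
    have hmin := Nat.find_min (hex A) hlt
    push_neg at hmin
    have h1 : 1 ≤ sOf A - 1 := by omega
    have := hmin h1
    omega
  -- pigeonhole on mass
  have hpart : ∑ s ∈ Finset.Icc 1 ℓ, ∑ A ∈ T.filter (fun A => sOf A = s), μ A = 1 := by
    rw [Finset.sum_fiberwise_of_maps_to
      (fun A hA => Finset.mem_Icc.mpr ⟨hs1 A, hsle A hA⟩), hμ1]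
  have hpig : ∃ s ∈ Finset.Icc 1 ℓ,
      (1:ℝ)/ℓ ≤ ∑ A ∈ T.filter (fun A => sOf A = s), μ A := by
    by_contra hcon
    push_neg at hcon
    have hlt : ∑ s ∈ Finset.Icc 1 ℓ, ∑ A ∈ T.filter (fun A => sOf A = s), μ A
        < ∑ s ∈ Finset.Icc 1 ℓ, (1:ℝ)/ℓ :=
      Finset.sum_lt_sum_of_nonempty ⟨1, Finset.mem_Icc.mpr ⟨le_refl 1, hℓ⟩⟩ hcon
    rw [hpart, Finset.sum_const, Nat.card_Icc] at hlt
    simp only [Nat.add_sub_cancel, nsmul_eq_mul] at hlt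
    rw [mul_one_div, div_self (ne_of_gt hℓ0)] at hlt
    exact lt_irrefl _ hlt
  obtain ⟨s', hs'mem, hmass⟩ := hpig
  obtain ⟨hs'1, hs'ℓ⟩ := Finset.mem_Icc.mp hs'mem
  refine ⟨s', hs'mem, T.filter (fun A => sOf A = s'), Finset.filter_subset _ _,
    Kf s', ?_, hKcard s', ?_, hmass⟩
  · -- daisy condition
    intro u hu
    have hsub : (T.filter (fun A => sOf A = s')).filter (fun A => u ∈ A \ Kf s')
        ⊆ T.filter (fun A => u ∈ A) := by
      intro A hA
      simp only [Finset.mem_filter, Finset.mem_sdiff] at hA ⊢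
      exact ⟨hA.1.1, hA.2.1⟩
    have hcount : ((T.filter (fun A => sOf A = s')).filter
        (fun A => u ∈ A \ Kf s')).card ≤ deg u := Finset.card_le_card hsub
    rcases eq_or_lt_of_le hs'1 with h1 | h2
    · -- s' = 1
      have hm : max 1 (s' - 1) = s' := by omega
      rw [hm]
      have hdle : (deg u : ℝ) ≤ c * (n:ℝ) ^ ((s':ℝ)/(ℓ:ℝ)) :=
        not_lt.mp (fun h => hu ((hKmem s' u).mpr h))
      exact le_trans (by exact_mod_cast hcount) hdle
    · -- 2 ≤ s'
      have h2' : 2 ≤ s' := h2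
      have hm : max 1 (s' - 1) = s' - 1 := by omega
      rw [hm]
      by_cases hu' : u ∈ Kf (s' - 1)
      · -- filter is empty
        have hemp : (T.filter (fun A => sOf A = s')).filter
            (fun A => u ∈ A \ Kf s') = ∅ := by
          rw [Finset.filter_eq_empty_iff]
          intro A hA hcontra
          have hseq : sOf A = s' := (Finset.mem_filter.mp hA).2
          have hmin : s' ≤ (A \ Kf (s' - 1)).card := by
            have := hsmin A (by omega)
            rwa [hseq] at this
          have hsub2 : A \ Kf (s' - 1) ⊆ A \ Kf s' :=
            Finset.sdiff_subset_sdiff (Finset.Subset.refl A)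
              (hKanti (s' - 1) s' (Nat.sub_le _ _))
          have hcard2 : (A \ Kf s').card ≤ (A \ Kf (s' - 1)).card := by
            have h5 := hscard A
            rw [hseq] at h5
            exact le_trans h5 hmin
          have heq : A \ Kf (s' - 1) = A \ Kf s' :=
            Finset.eq_of_subset_of_card_le hsub2 hcard2
          rw [← heq] at hcontra
          exact (Finset.mem_sdiff.mp hcontra).2 hu'
        rw [hemp]
        simp only [Finset.card_empty, Nat.cast_zero]
        positivity
      · -- u has small degree
        have hdle : (deg u : ℝ) ≤ c * (n:ℝ) ^ (((s' - 1 : ℕ):ℝ)/(ℓ:ℝ)) :=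
          not_lt.mp (fun h => hu' ((hKmem (s' - 1) u).mpr h))
        exact le_trans (by exact_mod_cast hcount) hdle
  · -- petal size
    intro A hA
    have hseq : sOf A = s' := (Finset.mem_filter.mp hA).2
    have := hscard A
    rwa [hseq] at this
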